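/- arXiv:0811.0276 — 2 statements merged into one kernel-verified Lean document; each statement's English description precedes it below -/
import Mathlib

section
/- Let h : [0,∞) → [0,∞) be monotonically decreasing, integrable over bounded sets, and let Z = Z(2L,δ) = {x ∈ ℝ^d : x_1 ∈ [−L, L], |(0,x_2,…,x_d)| ≤ δ} be a cylinder of length 2L and radius δ centered at the origin. Then (1/λ(Z)^2) ∫_{Z×Z} h(|x−y|) dx dy ≤ (1/(2L)) ∫_{−L}^{L} h(|r|) dr. -/
open MeasureTheory Filter Topology

/-- The cylinder `Z(2L,δ) = {x ∈ ℝ^d : x_1 ∈ [−L,L], |(0,x_2,…,x_d)| ≤ δ}`,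
centered at the origin, of length `2L` and radius `δ`. -/
def Cylinder (d : ℕ) [NeZero d] (L δ : ℝ) : Set (EuclideanSpace ℝ (Fin d)) :=
  {x | x 0 ∈ Set.Icc (-L) L ∧
    Real.sqrt (∑ i ∈ Finset.univ.erase (0 : Fin d), (x i) ^ 2) ≤ δ}

section Aux

variable {H : ℝ → ℝ}

lemma aux_absII (hm : Measurable H) (hA : Antitone H) (hn : ∀ s, 0 ≤ H s) (a b : ℝ) :
    IntervalIntegrable (fun r => H |r|) volume a b := by
  refine (intervalIntegrable_const (c := H 0)).mono_fun
    ((hm.comp measurable_abs).aestronglyMeasurable) (Eventually.of_forall fun r => ?_)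
  simp only [Real.norm_eq_abs]
  rw [abs_of_nonneg (hn _), abs_of_nonneg (hn _)]
  exact hA (abs_nonneg r)

lemma aux_key (hm : Measurable H) (hA : Antitone H) (hn : ∀ s, 0 ≤ H s)
    {L t : ℝ} (hL : 0 < L) (ht0 : 0 ≤ t) (htL : t ≤ L) :
    (∫ r in (-L - t)..(L - t), H |r|) ≤ ∫ r in (-L)..L, H |r| := by
  have I := aux_absII hm hA hn
  have h1 : (∫ r in (-L - t)..(L - t), H |r|)
      = (∫ r in (-L - t)..(-L), H |r|) + ∫ r in (-L)..(L - t), H |r| :=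
    (intervalIntegral.integral_add_adjacent_intervals (I _ _) (I _ _)).symm
  have h2 : (∫ r in (-L)..L, H |r|)
      = (∫ r in (-L)..(L - t), H |r|) + ∫ r in (L - t)..L, H |r| :=
    (intervalIntegral.integral_add_adjacent_intervals (I _ _) (I _ _)).symm
  have e1 : (∫ r in (-L - t)..(-L), H |r|) ≤ t * H L := by
    have := intervalIntegral.integral_mono_on (by linarith : -L - t ≤ -L) (I _ _)
      (intervalIntegrable_const (c := H L)) (fun r hr => ?_)
    · refine this.trans (le_of_eq ?_)
      rw [intervalIntegral.integral_const, smul_eq_mul]; ring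
    · have hr1 : r ≤ -L := hr.2
      have : L ≤ |r| := by
        rw [abs_of_nonpos (by linarith)]; linarith
      exact hA this
  have e2 : t * H L ≤ ∫ r in (L - t)..L, H |r| := by
    have := intervalIntegral.integral_mono_on (by linarith : L - t ≤ L)
      (intervalIntegrable_const (c := H L)) (I _ _) (fun r hr => ?_)
    · refine le_trans (le_of_eq ?_) this
      rw [intervalIntegral.integral_const, smul_eq_mul]; ring
    · have hr0 : 0 ≤ r := by have := hr.1; linarith
      have : |r| ≤ L := by rw [abs_of_nonneg hr0]; exact hr.2
      exact hA this
  linarith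

lemma aux_shift (hm : Measurable H) (hA : Antitone H) (hn : ∀ s, 0 ≤ H s)
    {L t : ℝ} (hL : 0 < L) (ht : t ∈ Set.Icc (-L) L) :
    (∫ s in (-L)..L, H |s - t|) ≤ ∫ r in (-L)..L, H |r| := by
  rw [intervalIntegral.integral_comp_sub_right (fun s => H |s|) t]
  rcases le_total 0 t with h0 | h0
  · exact aux_key hm hA hn hL h0 ht.2
  · have hflip : (∫ r in (-L - -t)..(L - -t), H |-r|) = ∫ r in (-L - t)..(L - t), H |r| := by
      have := intervalIntegral.integral_comp_neg (a := -L - -t) (b := L - -t)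
        (fun r => H |r|)
      rw [this]
      congr 1 <;> ring
    have : (∫ r in (-L - t)..(L - t), H |r|) = ∫ r in (-L - -t)..(L - -t), H |r| := by
      rw [← hflip]
      simp only [abs_neg]
    rw [this]
    exact aux_key hm hA hn hL (by linarith) (by linarith [ht.1])

end Aux

/-- Lemma 4.1(ii): for decreasing `h ≥ 0`, the average of `h(|x−y|)` over the square of
the cylinder `Z(2L,δ)` is bounded by the one-dimensional average of `h(|r|)` over
`[−L,L]`. -/
theorem cylinder_double_average_le
    {d : ℕ} [NeZero d] (hd : 2 ≤ d)
    (h : ℝ → ℝ) (hmono : AntitoneOn h (Set.Ici 0))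
    (hnonneg : ∀ s : ℝ, 0 ≤ s → 0 ≤ h s)
    (hint : ∀ R : ℝ, 0 < R → IntegrableOn h (Set.Icc 0 R) volume)
    (L δ : ℝ) (hL : 0 < L) (hδ : 0 < δ) :
    (1 / (volume (Cylinder d L δ)).toReal ^ 2) *
        ∫ p in Cylinder d L δ ×ˢ Cylinder d L δ, h ‖p.1 - p.2‖
          ∂((volume : Measure (EuclideanSpace ℝ (Fin d))).prod volume)
      ≤ (1 / (2 * L)) * ∫ r in (-L)..L, h |r| := by
  classical
  -- extend `h` to a globally antitone function `H`
  set H : ℝ → ℝ := fun s => h (max s 0) with hHdef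
  have hHanti : Antitone H := fun a b hab =>
    hmono (le_max_right a 0) (le_max_right b 0) (max_le_max hab le_rfl)
  have hHnn : ∀ s, 0 ≤ H s := fun s => hnonneg _ (le_max_right _ _)
  have hHm : Measurable H := hHanti.measurable
  have hHeq : ∀ s : ℝ, 0 ≤ s → H s = h s := fun s hs => by
    simp only [hHdef, max_eq_left hs]
  obtain ⟨n, rfl⟩ : ∃ n, d = n + 1 := ⟨d - 1, by omega⟩
  set B : Set (Fin n → ℝ) := {y | Real.sqrt (∑ i, (y i) ^ 2) ≤ δ} with hBdef
  set Ic : Set ℝ := Set.Icc (-L) L with hIcdef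
  set e := (MeasurableEquiv.toLp 2 (Fin (n + 1) → ℝ)).symm with hedef
  set π0 := MeasurableEquiv.piFinSuccAbove (fun _ : Fin (n + 1) => ℝ) 0 with hπdef
  set ψ := e.trans π0 with hψdef
  have hψ : MeasurePreserving ψ volume
      ((volume : Measure ℝ).prod (volume : Measure (Fin n → ℝ))) := by
    have h1 := EuclideanSpace.volume_preserving_symm_measurableEquiv_toLp (Fin (n + 1))
    have h2 := measurePreserving_piFinSuccAbove (fun _ : Fin (n + 1) => (volume : Measure ℝ)) 0
    rw [← volume_pi] at h2
    exact h2.comp h1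
  have hsum : ∀ x : EuclideanSpace ℝ (Fin (n + 1)),
      ∑ i ∈ Finset.univ.erase (0 : Fin (n + 1)), (x i) ^ 2
        = ∑ j : Fin n, (x ((0 : Fin (n + 1)).succAbove j)) ^ 2 := by
    intro x
    have h1 := Fin.sum_univ_succAbove (fun i => (x i) ^ 2) 0
    have h2 := Finset.sum_erase_add Finset.univ (fun i => (x i) ^ 2) (Finset.mem_univ (0 : Fin (n + 1)))
    simp only at h1 h2
    linarith
  have hZeq : Cylinder (n + 1) L δ = ψ ⁻¹' (Ic ×ˢ B) := by
    ext x
    simp only [Cylinder, Set.mem_setOf_eq, Set.mem_preimage, Set.mem_prod, hψdef, hπdef, hedef,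
      MeasurableEquiv.trans_apply, MeasurableEquiv.piFinSuccAbove_apply, hBdef, hIcdef, hsum x]
    rfl
  have hBclosed : IsClosed B := isClosed_le
    ((Real.continuous_sqrt).comp (continuous_finset_sum _ fun i _ => (continuous_apply i).pow 2))
    continuous_const
  have hBm : MeasurableSet B := hBclosed.measurableSet
  have hBpos : 0 < volume B := by
    have hU : IsOpen {y : Fin n → ℝ | ∑ i, (y i) ^ 2 < δ ^ 2} :=
      isOpen_lt (continuous_finset_sum _ fun i _ => (continuous_apply i).pow 2) continuous_const
    refine lt_of_lt_of_le (hU.measure_pos volume ⟨0, by simp [pow_pos hδ]⟩) (measure_mono ?_)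
    intro y hy
    simp only [Set.mem_setOf_eq] at hy ⊢
    calc Real.sqrt (∑ i, (y i) ^ 2) ≤ Real.sqrt (δ ^ 2) := Real.sqrt_le_sqrt hy.le
      _ = δ := by rw [Real.sqrt_sq hδ.le]
  have hBfin : volume B < ⊤ := by
    refine lt_of_le_of_lt (measure_mono (?_ : B ⊆ Set.pi Set.univ fun _ => Set.Icc (-δ) δ)) ?_
    · intro y hy
      intro i _
      have h1 : (y i) ^ 2 ≤ ∑ j, (y j) ^ 2 :=
        Finset.single_le_sum (fun j _ => sq_nonneg (y j)) (Finset.mem_univ i)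
      have h2 : |y i| ≤ δ := by
        rw [← Real.sqrt_sq_eq_abs]
        exact (Real.sqrt_le_sqrt h1).trans hy
      exact abs_le.mp h2
    · rw [volume_pi_pi]
      exact ENNReal.prod_lt_top fun i _ => by simp [Real.volume_Icc]
  set c : ℝ := (volume B).toReal with hcdef
  have hc0 : 0 < c := ENNReal.toReal_pos hBpos.ne' hBfin.ne
  have hSm : MeasurableSet (Ic ×ˢ B) := measurableSet_Icc.prod hBm
  have hvolZ : volume (Cylinder (n + 1) L δ) = ENNReal.ofReal (2 * L) * volume B := by
    rw [hZeq, hψ.measure_preimage hSm.nullMeasurableSet, Measure.prod_prod, hIcdef,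
      Real.volume_Icc]
    congr 2
    ring
  have hvolZR : (volume (Cylinder (n + 1) L δ)).toReal = 2 * L * c := by
    rw [hvolZ, ENNReal.toReal_mul, ENNReal.toReal_ofReal (by positivity)]
  set ρ : Measure ℝ := volume.restrict Ic with hρdef
  set νB : Measure (Fin n → ℝ) := volume.restrict B with hνdef
  haveI : IsFiniteMeasure ρ := ⟨by
    rw [hρdef, Measure.restrict_apply_univ, hIcdef, Real.volume_Icc]
    exact ENNReal.ofReal_lt_top⟩
  haveI : IsFiniteMeasure νB := ⟨by rw [hνdef, Measure.restrict_apply_univ]; exact hBfin⟩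
  set P : Measure (ℝ × (Fin n → ℝ)) := ρ.prod νB with hPdef
  haveI : IsFiniteMeasure P := by rw [hPdef]; infer_instance
  set M : ℝ := ∫ r in Ic, H |r| with hMdef
  have hM0 : 0 ≤ M := integral_nonneg fun r => hHnn _
  have hMi : (∫ r in (-L)..L, h |r|) = M := by
    have habs : ∀ r : ℝ, h |r| = H |r| := fun r => (hHeq _ (abs_nonneg r)).symm
    rw [hMdef, intervalIntegral.integral_of_le (by linarith), hIcdef,
      ← integral_Icc_eq_integral_Ioc]
    simp_rw [habs]
  have hshift : ∀ a ∈ Ic, (∫ s in Ic, H |a - s|) ≤ M := by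
    intro a ha
    have h1 : (∫ s in Ic, H |a - s|) = ∫ s in (-L)..L, H |s - a| := by
      rw [intervalIntegral.integral_of_le (by linarith), hIcdef,
        ← integral_Icc_eq_integral_Ioc]
      simp_rw [abs_sub_comm]
    rw [h1, hMdef]
    have h2 : (∫ r in Ic, H |r|) = ∫ r in (-L)..L, H |r| := by
      rw [intervalIntegral.integral_of_le (by linarith), hIcdef,
        ← integral_Icc_eq_integral_Ioc]
    rw [h2]
    exact aux_shift hHm hHanti hHnn hL ha
  set Z : Set (EuclideanSpace ℝ (Fin (n + 1))) := Cylinder (n + 1) L δ with hZdef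
  have hZm : MeasurableSet Z := by rw [hZeq]; exact ψ.measurable hSm
  have habs_le : ∀ x y : EuclideanSpace ℝ (Fin (n + 1)), |x 0 - y 0| ≤ ‖x - y‖ := by
    intro x y
    have h0 : (x - y) 0 = x 0 - y 0 := rfl
    rw [← h0, EuclideanSpace.norm_eq, ← Real.sqrt_sq_eq_abs]
    apply Real.sqrt_le_sqrt
    calc ((x - y) 0) ^ 2 = ‖(x - y) 0‖ ^ 2 := by rw [Real.norm_eq_abs, sq_abs]
      _ ≤ ∑ i, ‖(x - y) i‖ ^ 2 :=
        Finset.single_le_sum (f := fun i : Fin (n + 1) => ‖(x - y) i‖ ^ 2)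
          (fun i _ => sq_nonneg _) (Finset.mem_univ (0 : Fin (n + 1)))
  have hproj : Measurable fun x : EuclideanSpace ℝ (Fin (n + 1)) => x 0 :=
    (measurable_pi_apply (0 : Fin (n + 1))).comp e.measurable
  have hvolZZfin : ((volume : Measure (EuclideanSpace ℝ (Fin (n + 1)))).prod volume)
      (Z ×ˢ Z) < ⊤ := by
    rw [Measure.prod_prod, hZdef, hvolZ]
    exact ENNReal.mul_lt_top (ENNReal.mul_lt_top ENNReal.ofReal_lt_top hBfin)
      (ENNReal.mul_lt_top ENNReal.ofReal_lt_top hBfin)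
  haveI : IsFiniteMeasure (((volume : Measure (EuclideanSpace ℝ (Fin (n + 1)))).prod
      volume).restrict (Z ×ˢ Z)) :=
    ⟨by rw [Measure.restrict_apply_univ]; exact hvolZZfin⟩
  have hmeas1 : Measurable fun p : EuclideanSpace ℝ (Fin (n + 1)) ×
      EuclideanSpace ℝ (Fin (n + 1)) => H ‖p.1 - p.2‖ :=
    hHm.comp (continuous_fst.sub continuous_snd).norm.measurable
  have hmeas2 : Measurable fun p : EuclideanSpace ℝ (Fin (n + 1)) ×
      EuclideanSpace ℝ (Fin (n + 1)) => H |p.1 0 - p.2 0| :=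
    hHm.comp (((hproj.comp measurable_fst).sub (hproj.comp measurable_snd)).abs)
  have hIle : (∫ p in Z ×ˢ Z, h ‖p.1 - p.2‖
        ∂((volume : Measure (EuclideanSpace ℝ (Fin (n + 1)))).prod volume))
      ≤ ∫ p in Z ×ˢ Z, H |p.1 0 - p.2 0|
        ∂((volume : Measure (EuclideanSpace ℝ (Fin (n + 1)))).prod volume) := by
    have hre : ∀ p : EuclideanSpace ℝ (Fin (n + 1)) × EuclideanSpace ℝ (Fin (n + 1)),
        h ‖p.1 - p.2‖ = H ‖p.1 - p.2‖ := fun p => (hHeq _ (norm_nonneg _)).symm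
    simp_rw [hre]
    refine integral_mono ?_ ?_ ?_
    · refine Integrable.mono' (integrable_const (H 0)) hmeas1.aestronglyMeasurable
        (Eventually.of_forall fun p => ?_)
      rw [Real.norm_eq_abs, abs_of_nonneg (hHnn _)]
      exact hHanti (norm_nonneg _)
    · refine Integrable.mono' (integrable_const (H 0)) hmeas2.aestronglyMeasurable
        (Eventually.of_forall fun p => ?_)
      rw [Real.norm_eq_abs, abs_of_nonneg (hHnn _)]
      exact hHanti (abs_nonneg _)
    · exact fun p => hHanti (habs_le p.1 p.2)
  -- transfer to the product space
  have hΦ : MeasurePreserving (Prod.map ψ ψ)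
      ((volume : Measure (EuclideanSpace ℝ (Fin (n + 1)))).prod volume)
      ((((volume : Measure ℝ).prod (volume : Measure (Fin n → ℝ)))).prod
        (((volume : Measure ℝ).prod (volume : Measure (Fin n → ℝ))))) := hψ.prod hψ
  have hΦemb : MeasurableEmbedding (Prod.map ψ ψ) :=
    ψ.measurableEmbedding.prodMap ψ.measurableEmbedding
  have hpre : Z ×ˢ Z = Prod.map ψ ψ ⁻¹' ((Ic ×ˢ B) ×ˢ (Ic ×ˢ B)) := by
    rw [hZeq]
    ext p
    simp [Prod.map]
  have htrans : (∫ p in Z ×ˢ Z, H |p.1 0 - p.2 0|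
        ∂((volume : Measure (EuclideanSpace ℝ (Fin (n + 1)))).prod volume))
      = ∫ q in (Ic ×ˢ B) ×ˢ (Ic ×ˢ B), H |q.1.1 - q.2.1|
        ∂((((volume : Measure ℝ).prod (volume : Measure (Fin n → ℝ)))).prod
          (((volume : Measure ℝ).prod (volume : Measure (Fin n → ℝ))))) := by
    rw [hpre]
    exact hΦ.setIntegral_preimage_emb hΦemb
      (fun q => H |q.1.1 - q.2.1|) ((Ic ×ˢ B) ×ˢ (Ic ×ˢ B))
  have hresP : ((((volume : Measure ℝ).prod (volume : Measure (Fin n → ℝ)))).prod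
      (((volume : Measure ℝ).prod (volume : Measure (Fin n → ℝ))))).restrict
        ((Ic ×ˢ B) ×ˢ (Ic ×ˢ B)) = P.prod P := by
    rw [hPdef, hρdef, hνdef, Measure.prod_restrict, Measure.prod_restrict]
  have hmeas3 : Measurable fun q : (ℝ × (Fin n → ℝ)) × (ℝ × (Fin n → ℝ)) =>
      H |q.1.1 - q.2.1| :=
    hHm.comp (((measurable_fst.comp measurable_fst).sub
      (measurable_fst.comp measurable_snd)).abs)
  have hGint : Integrable (fun q : (ℝ × (Fin n → ℝ)) × (ℝ × (Fin n → ℝ)) =>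
      H |q.1.1 - q.2.1|) (P.prod P) := by
    refine Integrable.mono' (integrable_const (H 0)) hmeas3.aestronglyMeasurable
      (Eventually.of_forall fun q => ?_)
    rw [Real.norm_eq_abs, abs_of_nonneg (hHnn _)]
    exact hHanti (abs_nonneg _)
  have hinner : ∀ a : ℝ × (Fin n → ℝ),
      (∫ y, H |a.1 - y.1| ∂P) = c * ∫ s, H |a.1 - s| ∂ρ := by
    intro a
    have hmap : Measure.map Prod.fst P = volume B • ρ := by
      rw [hPdef, Measure.map_fst_prod, hνdef, Measure.restrict_apply_univ]
    have hgm : Measurable fun s : ℝ => H |a.1 - s| :=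
      hHm.comp ((measurable_const.sub measurable_id).abs)
    calc (∫ y, H |a.1 - y.1| ∂P)
        = ∫ s, H |a.1 - s| ∂(Measure.map Prod.fst P) :=
          (integral_map measurable_fst.aemeasurable hgm.aestronglyMeasurable).symm
      _ = c * ∫ s, H |a.1 - s| ∂ρ := by
          rw [hmap, integral_smul_measure, hcdef, smul_eq_mul]
  have hae : ∀ᵐ a ∂P, a.1 ∈ Ic := by
    rw [ae_iff]
    refine measure_mono_null (fun a ha => ?_) (?_ : P ((Icᶜ) ×ˢ Set.univ) = 0)
    · exact ⟨ha, Set.mem_univ _⟩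
    · rw [hPdef, Measure.prod_prod, hρdef,
        Measure.restrict_apply measurableSet_Icc.compl]
      simp [hIcdef]
  have houter : (∫ a, (∫ y, H |a.1 - y.1| ∂P) ∂P) ≤ (2 * L * c) * (c * M) := by
    have hb : ∀ᵐ a ∂P, (∫ y, H |a.1 - y.1| ∂P) ≤ c * M := by
      filter_upwards [hae] with a ha
      rw [hinner a]
      exact mul_le_mul_of_nonneg_left (hshift a.1 ha) hc0.le
    have hi1 : Integrable (fun a => ∫ y, H |a.1 - y.1| ∂P) P := by
      have := hGint.integral_prod_left
      simpa using this
    calc (∫ a, (∫ y, H |a.1 - y.1| ∂P) ∂P)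
        ≤ ∫ _, c * M ∂P := integral_mono_ae hi1 (integrable_const _) hb
      _ = (P Set.univ).toReal * (c * M) := by rw [integral_const, smul_eq_mul, measureReal_def]
      _ = (2 * L * c) * (c * M) := by
          congr 1
          rw [hPdef, ← Set.univ_prod_univ, Measure.prod_prod, hρdef, hνdef,
            Measure.restrict_apply_univ, Measure.restrict_apply_univ, hIcdef,
            Real.volume_Icc, ENNReal.toReal_mul,
            ENNReal.toReal_ofReal (by linarith : (0:ℝ) ≤ L - -L), hcdef]
          ring
  have hkey : (∫ p in Z ×ˢ Z, h ‖p.1 - p.2‖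
        ∂((volume : Measure (EuclideanSpace ℝ (Fin (n + 1)))).prod volume))
      ≤ (2 * L * c) * (c * M) := by
    refine hIle.trans ?_
    rw [htrans, hresP, integral_prod _ hGint]
    exact houter
  rw [hvolZR, hMi]
  have hpos : (0:ℝ) < 1 / (2 * L * c) ^ 2 := by positivity
  calc 1 / (2 * L * c) ^ 2 * (∫ p in Z ×ˢ Z, h ‖p.1 - p.2‖
        ∂((volume : Measure (EuclideanSpace ℝ (Fin (n + 1)))).prod volume))
      ≤ 1 / (2 * L * c) ^ 2 * ((2 * L * c) * (c * M)) :=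
        mul_le_mul_of_nonneg_left hkey hpos.le
    _ = 1 / (2 * L) * M := by
        field_simp
end

section
/- Let h : [0,∞) → [0,∞) be monotonically decreasing with h(s) → 1 as s → ∞, h ≥ 1, and h(s) ≤ C s^μ near 0 with μ > −1. Then the normalized double integral (1/λ(Z(2L,δ))^2) ∫_{Z(2L,δ)×Z(2L,δ)} h(|x−y|) dx dy converges to 1 as L → ∞, uniformly in δ > 0. -/
open MeasureTheory Filter Topology

noncomputable section CylAux

/-- cross-sectional ball -/
def crossBall (n : ℕ) (δ : ℝ) : Set (Fin n → ℝ) :=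
  {v | Real.sqrt (∑ i, (v i) ^ 2) ≤ δ}

/-- generalized cylinder -/
def cylSet (n : ℕ) (α β δ : ℝ) : Set (EuclideanSpace ℝ (Fin (n+1))) :=
  {x | x 0 ∈ Set.Icc α β ∧
    Real.sqrt (∑ i ∈ Finset.univ.erase (0 : Fin (n+1)), (x i) ^ 2) ≤ δ}

def cylEquiv (n : ℕ) : EuclideanSpace ℝ (Fin (n+1)) ≃ᵐ ℝ × (Fin n → ℝ) :=
  (MeasurableEquiv.toLp 2 (Fin (n+1) → ℝ)).symm.trans
    (MeasurableEquiv.piFinSuccAbove (fun _ : Fin (n+1) => ℝ) 0)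

lemma cylEquiv_measurePreserving (n : ℕ) :
    MeasurePreserving (cylEquiv n) volume
      ((volume : Measure ℝ).prod (volume : Measure (Fin n → ℝ))) := by
  have h1 := EuclideanSpace.volume_preserving_symm_measurableEquiv_toLp (Fin (n+1))
  have h2 := measurePreserving_piFinSuccAbove (fun _ : Fin (n+1) => (volume : Measure ℝ)) 0
  exact h2.comp h1

lemma measurableSet_crossBall (n : ℕ) (δ : ℝ) : MeasurableSet (crossBall n δ) := by
  have : Measurable fun v : Fin n → ℝ => Real.sqrt (∑ i, (v i) ^ 2) := by
    apply Real.continuous_sqrt.measurable.comp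
    exact Finset.measurable_sum _ fun i _ => (measurable_pi_apply i).pow_const 2
  exact measurableSet_le this measurable_const

lemma sum_erase_eq (n : ℕ) (x : Fin (n+1) → ℝ) :
    ∑ i ∈ Finset.univ.erase (0 : Fin (n+1)), (x i) ^ 2 = ∑ j : Fin n, (x j.succ) ^ 2 := by
  have h1 : ∑ i ∈ Finset.univ.erase (0 : Fin (n+1)), (x i) ^ 2 + (x 0) ^ 2
      = ∑ i : Fin (n+1), (x i) ^ 2 := Finset.sum_erase_add _ _ (Finset.mem_univ _)
  have h2 := Fin.sum_univ_succ (fun i : Fin (n+1) => (x i) ^ 2)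
  linarith

lemma cylSet_eq_preimage (n : ℕ) (α β δ : ℝ) :
    cylSet n α β δ = cylEquiv n ⁻¹' (Set.Icc α β ×ˢ crossBall n δ) := by
  ext x
  have : cylEquiv n x = (x 0, fun j : Fin n => x j.succ) := rfl
  simp only [cylSet, Set.mem_setOf_eq, Set.mem_preimage, this, Set.mem_prod, crossBall,
    sum_erase_eq n x]

lemma measurableSet_cylSet (n : ℕ) (α β δ : ℝ) : MeasurableSet (cylSet n α β δ) := by
  rw [cylSet_eq_preimage]
  exact (cylEquiv n).measurable (measurableSet_Icc.prod (measurableSet_crossBall n δ))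

lemma volume_cylSet (n : ℕ) (α β δ : ℝ) :
    volume (cylSet n α β δ) = ENNReal.ofReal (β - α) * volume (crossBall n δ) := by
  rw [cylSet_eq_preimage,
    (cylEquiv_measurePreserving n).measure_preimage
      (measurableSet_Icc.prod (measurableSet_crossBall n δ)).nullMeasurableSet,
    Measure.prod_prod, Real.volume_Icc]

lemma crossBall_volume_lt_top (n : ℕ) (δ : ℝ) (hδ : 0 ≤ δ) :
    volume (crossBall n δ) < ⊤ := by
  have hsub : crossBall n δ ⊆ Set.univ.pi fun _ : Fin n => Set.Icc (-δ) δ := by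
    intro v hv i _
    have h1 : (v i) ^ 2 ≤ ∑ j, (v j) ^ 2 :=
      Finset.single_le_sum (fun j _ => sq_nonneg (v j)) (Finset.mem_univ i)
    have h2 : |v i| ≤ δ := by
      calc |v i| = Real.sqrt ((v i) ^ 2) := (Real.sqrt_sq_eq_abs _).symm
        _ ≤ Real.sqrt (∑ j, (v j) ^ 2) := Real.sqrt_le_sqrt h1
        _ ≤ δ := hv
    exact abs_le.mp h2
  calc volume (crossBall n δ) ≤ volume (Set.univ.pi fun _ : Fin n => Set.Icc (-δ) δ) :=
        measure_mono hsub
    _ = ∏ _i : Fin n, ENNReal.ofReal (δ - -δ) := by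
        rw [volume_pi_pi]; simp [Real.volume_Icc]
    _ < ⊤ := by
        apply ENNReal.prod_lt_top
        intro i _
        exact ENNReal.ofReal_lt_top

lemma crossBall_volume_pos (n : ℕ) (hn : 1 ≤ n) (δ : ℝ) (hδ : 0 < δ) :
    0 < volume (crossBall n δ) := by
  set c : ℝ := δ / n with hc
  have hn' : (1:ℝ) ≤ n := by exact_mod_cast hn
  have hcpos : 0 < c := div_pos hδ (by linarith)
  have hsub : (Set.univ.pi fun _ : Fin n => Set.Icc (-c) c) ⊆ crossBall n δ := by
    intro v hv
    have hbound : ∀ i, (v i) ^ 2 ≤ c ^ 2 := by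
      intro i
      have := hv i (Set.mem_univ i)
      have habs : |v i| ≤ c := abs_le.mpr ⟨this.1, this.2⟩
      calc (v i) ^ 2 = |v i| ^ 2 := (sq_abs _).symm
        _ ≤ c ^ 2 := by nlinarith [abs_nonneg (v i)]
    have hsum : ∑ i, (v i) ^ 2 ≤ n * c ^ 2 := by
      calc ∑ i, (v i) ^ 2 ≤ ∑ _i : Fin n, c ^ 2 := Finset.sum_le_sum fun i _ => hbound i
        _ = n * c ^ 2 := by rw [Finset.sum_const]; simp [mul_comm]
    have hle : (n : ℝ) * c ^ 2 ≤ δ ^ 2 := by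
      have h0 : (0:ℝ) < (n:ℝ) := by linarith
      have heq : (n:ℝ) * c ^ 2 = δ ^ 2 / n := by
        rw [hc]; field_simp
      rw [heq]
      exact div_le_self (sq_nonneg δ) hn'
    show Real.sqrt (∑ i, (v i) ^ 2) ≤ δ
    calc Real.sqrt (∑ i, (v i) ^ 2) ≤ Real.sqrt (δ ^ 2) := Real.sqrt_le_sqrt (hsum.trans hle)
      _ = δ := by rw [Real.sqrt_sq hδ.le]
  calc (0:ENNReal) < ∏ _i : Fin n, ENNReal.ofReal (c - -c) := by
        rw [CanonicallyOrderedAdd.prod_pos]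
        intro i _
        simp only [ENNReal.ofReal_pos]
        linarith
    _ = volume (Set.univ.pi fun _ : Fin n => Set.Icc (-c) c) := by
        rw [volume_pi_pi]; simp [Real.volume_Icc]
    _ ≤ volume (crossBall n δ) := measure_mono hsub

lemma abs_coord_sub_le_norm (n : ℕ) (x y : EuclideanSpace ℝ (Fin (n+1))) :
    |x 0 - y 0| ≤ ‖x - y‖ := by
  rw [EuclideanSpace.norm_eq]
  have hxy : ∀ i, (x - y) i = x i - y i := fun i => rfl
  have h1 : ‖(x - y) 0‖ ^ 2 ≤ ∑ i, ‖(x - y) i‖ ^ 2 :=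
    Finset.single_le_sum (f := fun i => ‖(x - y) i‖ ^ 2) (fun j _ => sq_nonneg _)
      (Finset.mem_univ (0 : Fin (n+1)))
  calc |x 0 - y 0| = Real.sqrt (‖(x - y) 0‖ ^ 2) := by
        rw [hxy, Real.sqrt_sq (norm_nonneg _)]
        simp [Real.norm_eq_abs]
    _ ≤ Real.sqrt (∑ i, ‖(x - y) i‖ ^ 2) := Real.sqrt_le_sqrt h1

lemma measurable_eval0 (n : ℕ) : Measurable (fun x : EuclideanSpace ℝ (Fin (n+1)) => x 0) :=
  (measurable_pi_apply (0 : Fin (n+1))).comp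
    (MeasurableEquiv.toLp 2 (Fin (n+1) → ℝ)).symm.measurable

end CylAux

/-- If `h ≥ 1` is decreasing with `h(s) → 1` as `s → ∞` and `h(s) ≤ C s^μ` near `0`
with `μ > −1`, then the normalized double integral of `h(|x−y|)` over the square of
the cylinder `Z(2L,δ)` converges to `1` as `L → ∞`, uniformly in `δ > 0`. -/
theorem cylinder_double_average_tendsto_one_uniformly
    {d : ℕ} [NeZero d] (hd : 2 ≤ d)
    (h : ℝ → ℝ) (hmono : AntitoneOn h (Set.Ici 0))
    (hge1 : ∀ s : ℝ, 0 ≤ s → 1 ≤ h s)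
    (hlim : Tendsto h atTop (𝓝 1))
    (C μ : ℝ) (hC : 0 < C) (hμ : (-1 : ℝ) < μ)
    (a : ℝ) (ha : 0 < a) (hbound : ∀ s ∈ Set.Ioo (0 : ℝ) a, h s ≤ C * s ^ μ) :
    ∀ ε : ℝ, 0 < ε → ∃ L₀ : ℝ, ∀ L ≥ L₀, ∀ δ : ℝ, 0 < δ →
      |(1 / (volume (Cylinder d L δ)).toReal ^ 2) *
          (∫ p in Cylinder d L δ ×ˢ Cylinder d L δ, h ‖p.1 - p.2‖
            ∂((volume : Measure (EuclideanSpace ℝ (Fin d))).prod volume)) - 1| ≤ ε := by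
  intro ε hε
  obtain ⟨n, rfl⟩ : ∃ n, d = n + 1 := ⟨d - 1, by omega⟩
  have hn : 1 ≤ n := by omega
  have hev : ∀ᶠ s in atTop, h s ≤ 1 + ε / 2 :=
    hlim.eventually (eventually_le_nhds (by linarith))
  obtain ⟨M₀, hM₀⟩ := Filter.eventually_atTop.mp hev
  set M : ℝ := max M₀ 0 with hMdef
  have hM : ∀ s, M ≤ s → h s ≤ 1 + ε / 2 := fun s hs =>
    hM₀ s (le_trans (le_max_left _ _) hs)
  have hM0 : 0 ≤ M := le_max_right _ _
  set B : ℝ := h 0 - 1 with hBdef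
  have hB0 : 0 ≤ B := by have := hge1 0 le_rfl; rw [hBdef]; linarith
  refine ⟨max 1 (2 * B * M / ε), fun L hL δ hδ => ?_⟩
  have hL1 : (1:ℝ) ≤ L := le_trans (le_max_left _ _) hL
  have hL0 : 0 < L := by linarith
  have hBM : B * M ≤ ε / 2 * L := by
    have h1 : 2 * B * M / ε ≤ L := le_trans (le_max_right _ _) hL
    rw [div_le_iff₀ hε] at h1
    nlinarith
  set Z := Cylinder (n+1) L δ with hZdef
  have hZcyl : Z = cylSet n (-L) L δ := rfl
  have hZmeas : MeasurableSet Z := by rw [hZcyl]; exact measurableSet_cylSet n _ _ _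
  set A := volume (crossBall n δ) with hAdef
  have hAtop : A ≠ ⊤ := (crossBall_volume_lt_top n δ hδ.le).ne
  have hA0 : A ≠ 0 := (crossBall_volume_pos n hn δ hδ).ne'
  set Ar := A.toReal with hArdef
  have hArpos : 0 < Ar := ENNReal.toReal_pos hA0 hAtop
  have hZvol : volume Z = ENNReal.ofReal (2 * L) * A := by
    rw [hZcyl, volume_cylSet]
    congr 2
    ring
  have hVtop : volume Z ≠ ⊤ := by
    rw [hZvol]; exact ENNReal.mul_ne_top ENNReal.ofReal_ne_top hAtop
  set Vr := (volume Z).toReal with hVrdef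
  have hVr : Vr = 2 * L * Ar := by
    rw [hVrdef, hZvol, ENNReal.toReal_mul, ENNReal.toReal_ofReal (by linarith), hArdef]
  have hVrpos : 0 < Vr := by rw [hVr]; positivity
  set μ2 := ((volume : Measure (EuclideanSpace ℝ (Fin (n+1)))).prod (volume : Measure (EuclideanSpace ℝ (Fin (n+1))))) with hμ2
  have hZZmeas : MeasurableSet (Z ×ˢ Z) := hZmeas.prod hZmeas
  have hZZvol : μ2 (Z ×ˢ Z) = volume Z * volume Z := by rw [hμ2, Measure.prod_prod]
  have hZZfin : μ2 (Z ×ˢ Z) < ⊤ := by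
    rw [hZZvol]
    exact ENNReal.mul_lt_top (lt_top_iff_ne_top.mpr hVtop) (lt_top_iff_ne_top.mpr hVtop)
  have hub : ∀ s : ℝ, 0 ≤ s → h s ≤ h 0 := fun s hs =>
    hmono (Set.mem_Ici.mpr le_rfl) (Set.mem_Ici.mpr hs) hs
  have hfmeas : Measurable fun p :
      EuclideanSpace ℝ (Fin (n+1)) × EuclideanSpace ℝ (Fin (n+1)) => h ‖p.1 - p.2‖ := by
    have hmeas_h : Measurable fun s : ℝ => h (max s 0) := by
      apply Antitone.measurable
      intro s t hst
      exact hmono (Set.mem_Ici.mpr (le_max_right s 0)) (Set.mem_Ici.mpr (le_max_right t 0))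
        (max_le_max hst le_rfl)
    have heq : (fun p : EuclideanSpace ℝ (Fin (n+1)) × EuclideanSpace ℝ (Fin (n+1)) =>
        h ‖p.1 - p.2‖) = (fun s => h (max s 0)) ∘ (fun p => ‖p.1 - p.2‖) := by
      funext p; simp [max_eq_left (norm_nonneg _)]
    rw [heq]
    exact hmeas_h.comp (measurable_fst.sub measurable_snd).norm
  have hint : IntegrableOn (fun p => h ‖p.1 - p.2‖) (Z ×ˢ Z) μ2 := by
    apply Integrable.mono' (g := fun _ => h 0)
    · exact integrableOn_const hZZfin.ne
    · exact hfmeas.aestronglyMeasurable.restrict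
    · refine Filter.Eventually.of_forall fun p => ?_
      rw [Real.norm_eq_abs, abs_of_nonneg (by linarith [hge1 _ (norm_nonneg (p.1 - p.2))])]
      exact hub _ (norm_nonneg _)
  set S : Set (EuclideanSpace ℝ (Fin (n+1)) × EuclideanSpace ℝ (Fin (n+1))) :=
    {p | |p.1 0 - p.2 0| ≤ M} with hSdef
  have hSmeas : MeasurableSet S := by
    apply measurableSet_le _ measurable_const
    exact (((measurable_eval0 n).comp measurable_fst).sub
      ((measurable_eval0 n).comp measurable_snd)).abs
  have hTbound : μ2 ((Z ×ˢ Z) ∩ S) ≤ ENNReal.ofReal (2 * M) * A * volume Z := by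
    rw [hμ2, Measure.prod_apply (hZZmeas.inter hSmeas)]
    have hslice : ∀ x : EuclideanSpace ℝ (Fin (n+1)),
        volume (Prod.mk x ⁻¹' ((Z ×ˢ Z) ∩ S)) ≤
          Z.indicator (fun _ => ENNReal.ofReal (2 * M) * A) x := by
      intro x
      by_cases hx : x ∈ Z
      · rw [Set.indicator_of_mem hx]
        have hsub : Prod.mk x ⁻¹' ((Z ×ˢ Z) ∩ S) ⊆ cylSet n (x 0 - M) (x 0 + M) δ := by
          intro y hy
          obtain ⟨⟨hxZ, hyZ⟩, hyS⟩ := hy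
          have h1 : |x 0 - y 0| ≤ M := hyS
          have h2 := abs_le.mp h1
          refine ⟨⟨by linarith [h2.2], by linarith [h2.1]⟩, hyZ.2⟩
        calc volume (Prod.mk x ⁻¹' ((Z ×ˢ Z) ∩ S))
            ≤ volume (cylSet n (x 0 - M) (x 0 + M) δ) := measure_mono hsub
          _ = ENNReal.ofReal (2 * M) * A := by
              rw [volume_cylSet]; congr 2; ring
      · rw [Set.indicator_of_notMem hx]
        have hempty : Prod.mk x ⁻¹' ((Z ×ˢ Z) ∩ S) = ∅ := by
          ext y
          simp only [Set.mem_preimage, Set.mem_inter_iff, Set.mem_prod,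
            Set.mem_empty_iff_false, iff_false, not_and]
          intro hmem
          exact absurd hmem.1 hx
        rw [hempty, measure_empty]
    calc ∫⁻ x, volume (Prod.mk x ⁻¹' ((Z ×ˢ Z) ∩ S)) ∂volume
        ≤ ∫⁻ x, Z.indicator (fun _ => ENNReal.ofReal (2 * M) * A) x ∂volume :=
          lintegral_mono hslice
      _ = ENNReal.ofReal (2 * M) * A * volume Z := by
          rw [lintegral_indicator hZmeas, setLIntegral_const]
  set I := ∫ p in Z ×ˢ Z, h ‖p.1 - p.2‖ ∂μ2 with hIdef
  have hVV : (μ2 (Z ×ˢ Z)).toReal = Vr ^ 2 := by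
    rw [hZZvol, ENNReal.toReal_mul, hVrdef]; ring
  have hlower : Vr ^ 2 ≤ I := by
    have h1 : ∫ p in Z ×ˢ Z, (1:ℝ) ∂μ2 ≤ I := by
      apply setIntegral_mono_on (integrableOn_const hZZfin.ne) hint hZZmeas
      intro p _
      exact hge1 _ (norm_nonneg _)
    rwa [setIntegral_const, smul_eq_mul, mul_one, measureReal_def, hVV] at h1
  have hindint : IntegrableOn (fun p => S.indicator (fun _ => (1:ℝ)) p) (Z ×ˢ Z) μ2 :=
    (integrableOn_const hZZfin.ne).indicator hSmeas
  have hkey : I ≤ B * (μ2 ((Z ×ˢ Z) ∩ S)).toReal + (1 + ε / 2) * Vr ^ 2 := by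
    have hFint : IntegrableOn
        (fun p => B * S.indicator (fun _ => (1:ℝ)) p + (1 + ε / 2)) (Z ×ˢ Z) μ2 :=
      (hindint.const_mul B).add (integrableOn_const hZZfin.ne)
    have h1 : I ≤ ∫ p in Z ×ˢ Z,
        (B * S.indicator (fun _ => (1:ℝ)) p + (1 + ε / 2)) ∂μ2 := by
      apply setIntegral_mono_on hint hFint hZZmeas
      intro p _
      by_cases hpS : p ∈ S
      · rw [Set.indicator_of_mem hpS]
        have h2 := hub ‖p.1 - p.2‖ (norm_nonneg _)
        rw [hBdef]
        linarith
      · rw [Set.indicator_of_notMem hpS]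
        have hMlt : M < |p.1 0 - p.2 0| := not_le.mp hpS
        have h3 : M ≤ ‖p.1 - p.2‖ := le_trans hMlt.le (abs_coord_sub_le_norm n p.1 p.2)
        have h4 := hM _ h3
        linarith
    have hindval : ∫ p in Z ×ˢ Z, S.indicator (fun _ => (1:ℝ)) p ∂μ2
        = (μ2 ((Z ×ˢ Z) ∩ S)).toReal := by
      rw [integral_indicator hSmeas, setIntegral_const, smul_eq_mul, mul_one, measureReal_def,
        Measure.restrict_apply hSmeas, Set.inter_comm]
    have h2 : ∫ p in Z ×ˢ Z, (B * S.indicator (fun _ => (1:ℝ)) p + (1 + ε / 2)) ∂μ2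
        = B * (μ2 ((Z ×ˢ Z) ∩ S)).toReal + (1 + ε / 2) * Vr ^ 2 := by
      rw [integral_add (hindint.const_mul B) (integrableOn_const hZZfin.ne),
        integral_const_mul, hindval, setIntegral_const, smul_eq_mul, measureReal_def, hVV]
      ring
    linarith [h1, le_of_eq h2, ge_of_eq h2]
  have hK : (μ2 ((Z ×ˢ Z) ∩ S)).toReal ≤ 2 * M * Ar * Vr := by
    have hne : ENNReal.ofReal (2 * M) * A * volume Z ≠ ⊤ :=
      ENNReal.mul_ne_top (ENNReal.mul_ne_top ENNReal.ofReal_ne_top hAtop) hVtop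
    have h5 := ENNReal.toReal_mono hne hTbound
    rwa [ENNReal.toReal_mul, ENNReal.toReal_mul,
      ENNReal.toReal_ofReal (by linarith), ← hArdef, ← hVrdef] at h5
  have hupper : I ≤ (1 + ε) * Vr ^ 2 := by
    have h3 : B * (μ2 ((Z ×ˢ Z) ∩ S)).toReal ≤ B * (2 * M * Ar * Vr) :=
      mul_le_mul_of_nonneg_left hK hB0
    have h4 : B * (2 * M * Ar * Vr) ≤ ε / 2 * Vr ^ 2 := by
      rw [hVr]
      calc B * (2 * M * Ar * (2 * L * Ar)) = (B * M) * (4 * Ar ^ 2 * L) := by ring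
        _ ≤ (ε / 2 * L) * (4 * Ar ^ 2 * L) :=
            mul_le_mul_of_nonneg_right hBM (by positivity)
        _ = ε / 2 * (2 * L * Ar) ^ 2 := by ring
    calc I ≤ B * (μ2 ((Z ×ˢ Z) ∩ S)).toReal + (1 + ε / 2) * Vr ^ 2 := hkey
      _ ≤ ε / 2 * Vr ^ 2 + (1 + ε / 2) * Vr ^ 2 := add_le_add (h3.trans h4) le_rfl
      _ = (1 + ε) * Vr ^ 2 := by ring
  rw [abs_le]
  have hV2 : (0:ℝ) < Vr ^ 2 := by positivity
  constructor
  · have h5 : (1:ℝ) ≤ 1 / Vr ^ 2 * I := by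
      calc (1:ℝ) = 1 / Vr ^ 2 * Vr ^ 2 := by field_simp
        _ ≤ 1 / Vr ^ 2 * I := mul_le_mul_of_nonneg_left hlower (by positivity)
    linarith
  · have h6 : 1 / Vr ^ 2 * I ≤ 1 + ε := by
      calc 1 / Vr ^ 2 * I ≤ 1 / Vr ^ 2 * ((1 + ε) * Vr ^ 2) :=
            mul_le_mul_of_nonneg_left hupper (by positivity)
        _ = 1 + ε := by field_simp
    linarith
end
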